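/- Let N ≥ 5 be an integer, let Ω ⊂ ℝ^N be a bounded open set, let R > 0, and let ρ : ℝ^{N−1} → ℝ be a twice continuously differentiable function with ρ(0) = 0 and derivative Dρ(0) = 0. Assume that Ω ∩ B_R(0) = { x ∈ B_R(0) : x_N > ρ(x₁,…,x_{N−1}) }, where B_R(0) is the open Euclidean ball of radius R centered at the origin. Then lim_{ε→0⁺} ε^{−1} ∫_Ω U_{ε,0}(x)^{2(N−1)/(N−2)} dx = (1/2) ∫_{ℝ^N} U(x)^{2(N−1)/(N−2)} dx. -/

import Mathlib

open Real MeasureTheory Filter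

/-- The Talenti instanton `U(x) = (N(N−2)/(N(N−2)+|x|²))^((N−2)/2)` on `ℝ^N`. -/
noncomputable def talenti (N : ℕ) (x : EuclideanSpace ℝ (Fin N)) : ℝ :=
  ((N : ℝ) * ((N : ℝ) - 2) / ((N : ℝ) * ((N : ℝ) - 2) + ‖x‖ ^ 2)) ^ (((N : ℝ) - 2) / 2)

/-- The rescaled instanton centered at the origin, `U_{ε,0}(x) = ε^(−(N−2)/2)·U(x/ε)`. -/
noncomputable def talentiRescaled₀ (N : ℕ) (ε : ℝ) (x : EuclideanSpace ℝ (Fin N)) : ℝ :=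
  ε ^ (-(((N : ℝ) - 2) / 2)) * talenti N (ε⁻¹ • x)

open Pointwise

lemma talenti_base_pos {N : ℕ} (hN : 5 ≤ N) (y : EuclideanSpace ℝ (Fin N)) :
    0 < (N : ℝ) * ((N : ℝ) - 2) / ((N : ℝ) * ((N : ℝ) - 2) + ‖y‖ ^ 2) := by
  have h5 : (5:ℝ) ≤ (N:ℝ) := by exact_mod_cast hN
  have h1 : (0:ℝ) < (N : ℝ) * ((N : ℝ) - 2) := by nlinarith
  have h2 : (0:ℝ) < (N : ℝ) * ((N : ℝ) - 2) + ‖y‖ ^ 2 := by positivity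
  positivity

lemma talenti_rpow {N : ℕ} (hN : 5 ≤ N) (y : EuclideanSpace ℝ (Fin N)) :
    talenti N y ^ (2 * ((N : ℝ) - 1) / ((N : ℝ) - 2))
      = ((N : ℝ) * ((N : ℝ) - 2) / ((N : ℝ) * ((N : ℝ) - 2) + ‖y‖ ^ 2)) ^ ((N : ℝ) - 1) := by
  have h5 : (5:ℝ) ≤ (N:ℝ) := by exact_mod_cast hN
  rw [talenti, ← Real.rpow_mul (talenti_base_pos hN y).le]
  congr 1
  have : (N:ℝ) - 2 ≠ 0 := by linarith
  field_simp

lemma talenti_nonneg {N : ℕ} (hN : 5 ≤ N) (y : EuclideanSpace ℝ (Fin N)) : 0 ≤ talenti N y :=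
  Real.rpow_nonneg (talenti_base_pos hN y).le _

lemma talenti_cont {N : ℕ} (hN : 5 ≤ N) :
    Continuous fun y : EuclideanSpace ℝ (Fin N) =>
      talenti N y ^ (2 * ((N : ℝ) - 1) / ((N : ℝ) - 2)) := by
  have h5 : (5:ℝ) ≤ (N:ℝ) := by exact_mod_cast hN
  have hb : Continuous fun y : EuclideanSpace ℝ (Fin N) =>
      (N : ℝ) * ((N : ℝ) - 2) / ((N : ℝ) * ((N : ℝ) - 2) + ‖y‖ ^ 2) := by
    refine continuous_const.div (by fun_prop) fun y => ?_
    have : (0:ℝ) < (N : ℝ) * ((N : ℝ) - 2) + ‖y‖ ^ 2 := by nlinarith [sq_nonneg ‖y‖]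
    exact this.ne'
  have : Continuous (talenti N) := hb.rpow_const fun y => Or.inr (by linarith)
  exact this.rpow_const fun y => Or.inr (div_nonneg (by linarith) (by linarith))

lemma talenti_integrable {N : ℕ} (hN : 5 ≤ N) :
    Integrable fun y : EuclideanSpace ℝ (Fin N) =>
      talenti N y ^ (2 * ((N : ℝ) - 1) / ((N : ℝ) - 2)) := by
  have h5 : (5:ℝ) ≤ (N:ℝ) := by exact_mod_cast hN
  set c : ℝ := (N : ℝ) * ((N : ℝ) - 2) with hc
  have hc1 : (1:ℝ) ≤ c := by rw [hc]; nlinarith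
  have hq : (0:ℝ) ≤ (N:ℝ) - 1 := by linarith
  have hr : (Module.finrank ℝ (EuclideanSpace ℝ (Fin N)) : ℝ) < 2 * ((N:ℝ) - 1) := by
    rw [finrank_euclideanSpace_fin]; linarith
  refine ((integrable_one_add_norm hr).const_mul ((2 * c) ^ ((N:ℝ) - 1))).mono'
    (talenti_cont hN).aestronglyMeasurable (Eventually.of_forall fun y => ?_)
  have h1 : (0:ℝ) < 1 + ‖y‖ := by positivity
  have hpos : (0:ℝ) < c + ‖y‖ ^ 2 := by nlinarith [sq_nonneg ‖y‖]
  rw [Real.norm_eq_abs, abs_of_nonneg (Real.rpow_nonneg (talenti_nonneg hN y) _), talenti_rpow hN y,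
    ← hc]
  have step1 : c / (c + ‖y‖ ^ 2) ≤ 2 * c / (1 + ‖y‖) ^ 2 := by
    rw [div_le_div_iff₀ hpos (by positivity)]
    nlinarith [sq_nonneg (1 - ‖y‖), norm_nonneg y]
  have step2 : (c / (c + ‖y‖ ^ 2)) ^ ((N:ℝ) - 1) ≤ (2 * c / (1 + ‖y‖) ^ 2) ^ ((N:ℝ) - 1) :=
    Real.rpow_le_rpow (by positivity) step1 hq
  refine step2.trans (le_of_eq ?_)
  rw [Real.div_rpow (by linarith : (0:ℝ) ≤ 2 * c) (by positivity)]
  rw [← Real.rpow_natCast (1 + ‖y‖) 2, ← Real.rpow_mul h1.le]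
  rw [Real.rpow_neg h1.le, div_eq_mul_inv]
  norm_num

lemma coord_measurable {N : ℕ} (n : Fin N) :
    Measurable fun y : EuclideanSpace ℝ (Fin N) => y n :=
  (EuclideanSpace.proj (𝕜 := ℝ) n).continuous.measurable

lemma hyperplane_null {N : ℕ} (n : Fin N) :
    volume {y : EuclideanSpace ℝ (Fin N) | y n = 0} = 0 := by
  have hset : {y : EuclideanSpace ℝ (Fin N) | y n = 0}
      = (LinearMap.ker (EuclideanSpace.projₗ (𝕜 := ℝ) n) : Set (EuclideanSpace ℝ (Fin N))) := by
    ext y; simp only [Set.mem_setOf_eq, SetLike.mem_coe, LinearMap.mem_ker]; rfl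
  rw [hset]
  refine Measure.addHaar_submodule volume _ fun h => ?_
  have h1 : EuclideanSpace.single n (1:ℝ) ∈ LinearMap.ker (EuclideanSpace.projₗ (𝕜 := ℝ) n) := by
    rw [h]; trivial
  rw [LinearMap.mem_ker, show EuclideanSpace.projₗ (𝕜 := ℝ) n (EuclideanSpace.single n (1:ℝ))
      = (EuclideanSpace.single n (1:ℝ)) n from rfl, EuclideanSpace.single_apply] at h1
  simp at h1

lemma halfspace_integral {N : ℕ} (n : Fin N)
    (f : EuclideanSpace ℝ (Fin N) → ℝ) (hf_int : Integrable f)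
    (hf_norm : ∀ v w : EuclideanSpace ℝ (Fin N), ‖v‖ = ‖w‖ → f v = f w) :
    ∫ y in {y : EuclideanSpace ℝ (Fin N) | 0 < y n}, f y = (1/2) * ∫ y, f y := by
  set H : Set (EuclideanSpace ℝ (Fin N)) := {y | 0 < y n} with hH
  have hH_meas : MeasurableSet H := measurableSet_lt measurable_const (coord_measurable n)
  set e : EuclideanSpace ℝ (Fin N) := EuclideanSpace.single n (1:ℝ) with he
  set T : EuclideanSpace ℝ (Fin N) ≃ₗᵢ[ℝ] EuclideanSpace ℝ (Fin N) := Submodule.reflection (ℝ ∙ e)ᗮ with hT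
  have hT_apply : ∀ v : EuclideanSpace ℝ (Fin N), T v n = -(v n) := by
    intro v
    rw [hT, Submodule.reflection_orthogonal_apply, Submodule.reflection_singleton_apply]
    have he_norm : ‖e‖ = 1 := by rw [he, EuclideanSpace.norm_single]; norm_num
    have he_inner : (inner ℝ e v : ℝ) = v n := by
      rw [he, EuclideanSpace.inner_single_left]; simp
    show (-(2 • ((inner ℝ e v : ℝ) / ((‖e‖:ℝ)^2)) • e - v)) n = -(v n)
    simp only [PiLp.neg_apply, PiLp.sub_apply, PiLp.smul_apply, he_inner, he_norm,
      he, EuclideanSpace.single_apply, smul_eq_mul, nsmul_eq_mul]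
    simp
    rw [← he, he_inner]
    ring
  have hfT : ∀ v, f (T v) = f v := fun v => hf_norm _ _ (T.norm_map v)
  have hMP : MeasurePreserving T volume volume := T.measurePreserving
  have hemb : MeasurableEmbedding T := T.toMeasurableEquiv.measurableEmbedding
  have hpre : (T : EuclideanSpace ℝ (Fin N) → EuclideanSpace ℝ (Fin N)) ⁻¹' H
      = {y : EuclideanSpace ℝ (Fin N) | y n < 0} := by
    ext v
    simp only [Set.mem_preimage, hH, Set.mem_setOf_eq, hT_apply v]
    exact neg_pos
  have h3 : ∫ y in {y : EuclideanSpace ℝ (Fin N) | y n < 0}, f y = ∫ y in H, f y := by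
    rw [← hpre, ← hMP.setIntegral_preimage_emb hemb f H]
    exact setIntegral_congr_fun (hH_meas.preimage hemb.measurable) (fun x _ => (hfT x).symm)
  have hZ := hyperplane_null n
  have hcompl : (Hᶜ : Set (EuclideanSpace ℝ (Fin N))) =ᵐ[volume] {y : EuclideanSpace ℝ (Fin N) | y n < 0} := by
    rw [MeasureTheory.ae_eq_set]
    constructor
    · refine measure_mono_null (fun y hy => ?_) hZ
      obtain ⟨h1, h2⟩ := hy
      have h1' : ¬ (0 < y n) := h1
      have h2' : ¬ (y n < 0) := h2
      show y n = 0
      linarith [not_lt.1 h1', not_lt.1 h2']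
    · refine measure_mono_null (fun y hy => ?_) hZ
      obtain ⟨h1, h2⟩ := hy
      have h1' : y n < 0 := h1
      have h2' : 0 < y n := not_not.1 h2
      show y n = 0
      linarith
  have hsplit := integral_add_compl hH_meas hf_int
  have h4 : ∫ y in Hᶜ, f y = ∫ y in H, f y := by
    rw [setIntegral_congr_set hcompl, h3]
  rw [h4] at hsplit
  linarith

/-- Appendix B of the paper: for a bounded open set `Ω` whose boundary near the origin is the
graph `x_N = ρ(x′)` of a `C²` function with `ρ(0) = 0`, `Dρ(0) = 0`, one has
`ε⁻¹·∫_Ω U_{ε,0}^(2(N−1)/(N−2)) → (1/2)·∫_{ℝ^N} U^(2(N−1)/(N−2))` as `ε → 0⁺`. -/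
theorem stmt_18 (N : ℕ) (hN : 5 ≤ N) (Ω : Set (EuclideanSpace ℝ (Fin N)))
    (hΩb : Bornology.IsBounded Ω) (hΩo : IsOpen Ω) (R : ℝ) (hR : 0 < R)
    (ρ : EuclideanSpace ℝ (Fin (N - 1)) → ℝ) (hρ : ContDiff ℝ 2 ρ)
    (hρ0 : ρ 0 = 0) (hdρ0 : fderiv ℝ ρ 0 = 0)
    (hgraph : Ω ∩ Metric.ball (0 : EuclideanSpace ℝ (Fin N)) R
      = {x ∈ Metric.ball (0 : EuclideanSpace ℝ (Fin N)) R |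
          ρ (WithLp.toLp 2 (fun i : Fin (N - 1) => x (Fin.castLE (Nat.sub_le N 1) i))) < x ⟨N - 1, by omega⟩}) :
    Tendsto
      (fun ε : ℝ =>
        ε⁻¹ * ∫ x in Ω, talentiRescaled₀ N ε x ^ (2 * ((N : ℝ) - 1) / ((N : ℝ) - 2)))
      (nhdsWithin (0 : ℝ) (Set.Ioi 0))
      (nhds ((1 / 2) *
        ∫ x : EuclideanSpace ℝ (Fin N), talenti N x ^ (2 * ((N : ℝ) - 1) / ((N : ℝ) - 2)))) := by
  have h5 : (5:ℝ) ≤ (N:ℝ) := by exact_mod_cast hN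
  set τ : ℝ := 2 * ((N : ℝ) - 1) / ((N : ℝ) - 2) with hτ
  set g : EuclideanSpace ℝ (Fin N) → ℝ := fun y => talenti N y ^ τ with hg
  set n : Fin N := ⟨N - 1, by omega⟩ with hn
  set H : Set (EuclideanSpace ℝ (Fin N)) := {y | 0 < y n} with hH
  have hH_meas : MeasurableSet H := measurableSet_lt measurable_const (coord_measurable n)
  have hg_nonneg : ∀ y, 0 ≤ g y := fun y => Real.rpow_nonneg (talenti_nonneg hN y) τ
  have hg_int : Integrable g := talenti_integrable hN
  have hg_cont : Continuous g := talenti_cont hN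
  -- Step 1: rescaling identity
  have key : ∀ ε : ℝ, 0 < ε →
      ε⁻¹ * ∫ x in Ω, talentiRescaled₀ N ε x ^ τ = ∫ y in ε⁻¹ • Ω, g y := by
    intro ε hε
    have hexp : -(((N:ℝ) - 2) / 2) * τ = -((N:ℝ) - 1) := by
      rw [hτ]
      have : (N:ℝ) - 2 ≠ 0 := by linarith
      field_simp
    have h1 : ∀ x : EuclideanSpace ℝ (Fin N),
        talentiRescaled₀ N ε x ^ τ = ε ^ (-((N:ℝ) - 1)) * g (ε⁻¹ • x) := by
      intro x
      rw [talentiRescaled₀, Real.mul_rpow (Real.rpow_nonneg hε.le _) (talenti_nonneg hN _),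
        ← Real.rpow_mul hε.le, hexp, hg]
    simp only [h1]
    rw [integral_const_mul,
      Measure.setIntegral_comp_smul_of_pos volume (fun y => g y) Ω (inv_pos.2 hε),
      finrank_euclideanSpace_fin, smul_eq_mul, inv_pow, inv_inv]
    have hεne : ε ≠ 0 := hε.ne'
    have hrw : ε ^ (-((N:ℝ) - 1)) = (ε ^ (N - 1 : ℕ))⁻¹ := by
      rw [← Real.rpow_natCast ε (N - 1), ← Real.rpow_neg hε.le]
      congr 1
      have : ((N - 1 : ℕ) : ℝ) = (N:ℝ) - 1 := by
        have : (1:ℕ) ≤ N := by omega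
        push_cast [this]
        ring
      rw [this]
    rw [hrw]
    have hpow : ε ^ N = ε * ε ^ (N - 1 : ℕ) := by
      rw [← pow_succ']
      congr 1
      omega
    rw [hpow]
    generalize (∫ y in ε⁻¹ • Ω, g y) = I
    field_simp
  -- Step 2: dominated convergence
  have main : Tendsto (fun ε : ℝ => ∫ y, Set.indicator (ε⁻¹ • Ω) g y)
      (nhdsWithin (0:ℝ) (Set.Ioi 0)) (nhds (∫ y, H.indicator g y)) := by
    apply tendsto_integral_filter_of_dominated_convergence g
    · filter_upwards [self_mem_nhdsWithin] with ε (hε : ε ∈ Set.Ioi (0:ℝ))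
      exact hg_cont.aestronglyMeasurable.indicator
        ((hΩo.smul₀ (inv_ne_zero (ne_of_gt hε))).measurableSet)
    · filter_upwards [self_mem_nhdsWithin] with ε hε
      refine Eventually.of_forall fun y => ?_
      rw [Real.norm_eq_abs, abs_of_nonneg (Set.indicator_nonneg (fun z _ => hg_nonneg z) y)]
      exact Set.indicator_le_self' (fun z _ => hg_nonneg z) y
    · exact hg_int
    · -- a.e. pointwise convergence
      have hZ : ∀ᵐ y : EuclideanSpace ℝ (Fin N), y n ≠ 0 := by
        rw [ae_iff]
        convert hyperplane_null n using 2
        ext y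
        simp
      filter_upwards [hZ] with y hy
      -- shared slope fact
      set y' : EuclideanSpace ℝ (Fin (N-1)) :=
        WithLp.toLp 2 (fun i : Fin (N - 1) => y (Fin.castLE (Nat.sub_le N 1) i)) with hy'
      have hsl : Tendsto (fun ε : ℝ => ρ (ε • y') / ε) (nhdsWithin (0:ℝ) (Set.Ioi 0))
          (nhds 0) := by
        have hlin : HasDerivAt (fun t : ℝ => t • y') y' 0 := by
          simpa using (hasDerivAt_id (0:ℝ)).smul_const y'
        have hfd : HasFDerivAt ρ (fderiv ℝ ρ 0) ((fun t : ℝ => t • y') 0) := by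
          show HasFDerivAt ρ (fderiv ℝ ρ 0) ((0:ℝ) • y')
          rw [zero_smul]
          exact (hρ.differentiable (by norm_num)).differentiableAt.hasFDerivAt
        have hd : HasDerivAt (fun t : ℝ => ρ (t • y')) 0 0 := by
          have := hfd.comp_hasDerivAt 0 hlin
          rw [hdρ0, ContinuousLinearMap.zero_apply] at this
          exact this
        have hslope := hasDerivAt_iff_tendsto_slope.1 hd
        have hmono : nhdsWithin (0:ℝ) (Set.Ioi 0) ≤ nhdsWithin (0:ℝ) {(0:ℝ)}ᶜ :=
          nhdsWithin_mono 0 (fun x hx => ne_of_gt hx)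
        refine (hslope.mono_left hmono).congr fun ε => ?_
        rw [slope_def_field]
        simp [hρ0]
      have hyR : Tendsto (fun ε : ℝ => ε * ‖y‖) (nhdsWithin (0:ℝ) (Set.Ioi 0)) (nhds 0) := by
        have : Tendsto (fun ε : ℝ => ε * ‖y‖) (nhds (0:ℝ)) (nhds (0 * ‖y‖)) :=
          (continuous_id.mul continuous_const).tendsto 0
        rw [zero_mul] at this
        exact this.mono_left nhdsWithin_le_nhds
      have hball : ∀ᶠ ε in nhdsWithin (0:ℝ) (Set.Ioi 0),
          ∀ hε : 0 < ε, ε • y ∈ Metric.ball (0 : EuclideanSpace ℝ (Fin N)) R := by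
        filter_upwards [hyR.eventually_lt_const hR] with ε h2 hε
        rw [mem_ball_zero_iff, norm_smul, Real.norm_eq_abs, abs_of_pos hε]
        exact h2
      have harg : ∀ ε : ℝ,
          WithLp.toLp 2 (fun i : Fin (N - 1) => (ε • y) (Fin.castLE (Nat.sub_le N 1) i)) = ε • y' := by
        intro ε; rfl
      have hcoord : ∀ ε : ℝ, (ε • y) n = ε * y n := fun ε => rfl
      rcases lt_or_gt_of_ne hy with hneg | hpos
      · -- y n < 0 : indicator tends to 0
        have hHnot : y ∉ H := by
          rw [hH]
          simp only [Set.mem_setOf_eq, not_lt]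
          exact hneg.le
        rw [Set.indicator_of_notMem hHnot]
        have hevq : ∀ᶠ ε in nhdsWithin (0:ℝ) (Set.Ioi 0),
            Set.indicator (ε⁻¹ • Ω) g y = 0 := by
          filter_upwards [hsl.eventually_const_lt hneg, hball, self_mem_nhdsWithin]
            with ε h1 h2 (hε : ε ∈ Set.Ioi (0:ℝ))
          have hεpos : (0:ℝ) < ε := hε
          have hnot : ε • y ∉ Ω := by
            intro hmem
            have hin : ε • y ∈ Ω ∩ Metric.ball (0 : EuclideanSpace ℝ (Fin N)) R :=
              ⟨hmem, h2 hεpos⟩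
            rw [hgraph] at hin
            have h3 := hin.2
            rw [harg ε] at h3
            rw [show (ε • y) ⟨N - 1, by omega⟩ = ε * y n from rfl] at h3
            have h4 : ε * y n < ρ (ε • y') := by
              have := (lt_div_iff₀ hεpos).1 h1
              linarith [mul_comm (y n) ε]
            linarith
          have : y ∉ ε⁻¹ • Ω := by
            rw [Set.mem_smul_set_iff_inv_smul_mem₀ (inv_ne_zero hεpos.ne'), inv_inv]
            exact hnot
          exact Set.indicator_of_notMem this g
        exact Tendsto.congr' (hevq.mono fun ε h => h.symm) tendsto_const_nhds
      · -- y n > 0 : indicator tends to g y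
        have hHmem : y ∈ H := hpos
        rw [Set.indicator_of_mem hHmem]
        have hevq : ∀ᶠ ε in nhdsWithin (0:ℝ) (Set.Ioi 0),
            Set.indicator (ε⁻¹ • Ω) g y = g y := by
          filter_upwards [hsl.eventually_lt_const hpos, hball, self_mem_nhdsWithin]
            with ε h1 h2 (hε : ε ∈ Set.Ioi (0:ℝ))
          have hεpos : (0:ℝ) < ε := hε
          have hmem : ε • y ∈ Ω := by
            have : ε • y ∈ Ω ∩ Metric.ball (0 : EuclideanSpace ℝ (Fin N)) R := by
              rw [hgraph]
              refine ⟨h2 hεpos, ?_⟩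
              rw [harg ε, show (ε • y) ⟨N - 1, by omega⟩ = ε * y n from rfl]
              have := (div_lt_iff₀ hεpos).1 h1
              linarith [mul_comm (y n) ε]
            exact this.1
          have : y ∈ ε⁻¹ • Ω := by
            rw [Set.mem_smul_set_iff_inv_smul_mem₀ (inv_ne_zero hεpos.ne'), inv_inv]
            exact hmem
          exact Set.indicator_of_mem this g
        exact Tendsto.congr' (hevq.mono fun ε h => h.symm) tendsto_const_nhds
  -- Step 3: conclude
  have hhalf : ∫ y, H.indicator g y = (1/2) * ∫ y, g y := by
    rw [integral_indicator hH_meas]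
    exact halfspace_integral n g hg_int (fun v w hvw => by rw [hg]; simp only [talenti, hvw])
  rw [hhalf] at main
  refine main.congr' ?_
  filter_upwards [self_mem_nhdsWithin] with ε (hε : ε ∈ Set.Ioi (0:ℝ))
  have hεpos : (0:ℝ) < ε := hε
  rw [integral_indicator ((hΩo.smul₀ (inv_ne_zero hεpos.ne')).measurableSet)]
  exact (key ε hεpos).symm
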